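/- If the footprint Δ_≺(I) of an ideal I with respect to a monomial ordering ≺ is finite, then the variety V_F(I) has at most |Δ_≺(I)| points. -/

import Mathlib

open MvPolynomial

variable {F : Type*} [Field F] {m : ℕ}

/-- `d` is the exponent of the leading monomial of `p` with respect to the
monomial ordering `mo`. -/
def IsLeadingMonomial (mo : MonomialOrder (Fin m)) (p : MvPolynomial (Fin m) F)
    (d : Fin m →₀ ℕ) : Prop :=
  d ∈ p.support ∧ ∀ e ∈ p.support, mo.toSyn e ≤ mo.toSyn d

/-- The footprint of an ideal `I` w.r.t. a monomial ordering: the set of (exponents of)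
monomials which are divisible by no leading monomial of a nonzero element of `I`. -/
def footprint (mo : MonomialOrder (Fin m)) (I : Ideal (MvPolynomial (Fin m) F)) :
    Set (Fin m →₀ ℕ) :=
  {d | ∀ p ∈ I, p ≠ 0 → ∀ e, IsLeadingMonomial mo p e → ¬ e ≤ d}


/-- Footprint monomials together with `I` span everything. -/
lemma footprint_span (mo : MonomialOrder (Fin m)) (I : Ideal (MvPolynomial (Fin m) F))
    (p : MvPolynomial (Fin m) F) :
    p ∈ (Submodule.restrictScalars F I) ⊔
      Submodule.span F ((fun d => (monomial d (1:F))) '' footprint mo I) := by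
  set K := (Submodule.restrictScalars F I) ⊔
      Submodule.span F ((fun d => (monomial d (1:F))) '' footprint mo I) with hK
  have main : ∀ a : mo.syn, ∀ p : MvPolynomial (Fin m) F,
      (∀ e ∈ p.support, mo.toSyn e ≤ a) → p ∈ K := by
    intro a
    induction a using WellFoundedLT.induction with
    | ind a IH =>
      intro p hp
      by_cases hp0 : p = 0
      · simp [hp0]
      · -- leading exponent d
        obtain ⟨d, hd, hdmax⟩ : ∃ d ∈ p.support, ∀ e ∈ p.support, mo.toSyn e ≤ mo.toSyn d := by
          obtain ⟨d, hd, hsup⟩ := Finset.exists_mem_eq_sup p.support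
            (Finset.nonempty_iff_ne_empty.mpr (mt MvPolynomial.support_eq_empty.mp hp0)) mo.toSyn
          exact ⟨d, hd, fun e he => hsup ▸ Finset.le_sup he⟩
        have hda : mo.toSyn d ≤ a := hp _ hd
        -- given p' with strictly smaller support, conclude p' ∈ K
        have step : ∀ p' : MvPolynomial (Fin m) F,
            (∀ e ∈ p'.support, mo.toSyn e < mo.toSyn d) → p' ∈ K := by
          intro p' hp'
          by_cases h0 : p' = 0
          · simp [h0]
          · obtain ⟨d', hd', hmax'⟩ := Finset.exists_mem_eq_sup p'.support
              (Finset.nonempty_iff_ne_empty.mpr (mt MvPolynomial.support_eq_empty.mp h0)) mo.toSyn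
            exact IH (mo.toSyn d') (lt_of_lt_of_le (hp' _ hd') hda)
              p' (fun e he => hmax' ▸ Finset.le_sup he)
        by_cases hdf : d ∈ footprint mo I
        · -- subtract leading term, which lies in the span part
          set p' := p - monomial d (coeff d p) with hp'def
          have hp'K : p' ∈ K := by
            apply step
            intro e he
            rw [mem_support_iff, hp'def, coeff_sub, coeff_monomial] at he
            have hed : e ≠ d := by rintro rfl; simp at he
            have : coeff e p ≠ 0 := by
              simpa [show ¬ (d = e) from fun h => hed h.symm] using he
            exact lt_of_le_of_ne (hdmax e (mem_support_iff.mpr this))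
              (fun h => hed (mo.toSyn.injective h))
          have hmK : monomial d (coeff d p) ∈ K := by
            have : monomial d (coeff d p) = (coeff d p) • monomial d (1:F) := by
              simp [smul_monomial]
            rw [this]
            exact Submodule.smul_mem _ _ (Submodule.mem_sup_right
              (Submodule.subset_span ⟨d, hdf, rfl⟩))
          have : p = p' + monomial d (coeff d p) := by simp [hp'def]
          rw [this]; exact K.add_mem hp'K hmK
        · -- reduce by an element of I
          simp only [footprint, Set.mem_setOf_eq, not_forall] at hdf
          obtain ⟨q, hqI, hq0, e₀, hlm, he₀d'⟩ := hdf
          have he₀d : e₀ ≤ d := not_not.mp he₀d'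
          obtain ⟨he₀supp, he₀max⟩ := hlm
          have hlc : coeff e₀ q ≠ 0 := mem_support_iff.mp he₀supp
          set c : F := coeff d p / coeff e₀ q with hc
          set g : MvPolynomial (Fin m) F := monomial (d - e₀) c * q with hg
          have hgI : g ∈ I := I.mul_mem_left _ hqI
          have hgcoeff : ∀ f, coeff f g =
              if d - e₀ ≤ f then c * coeff (f - (d - e₀)) q else 0 := by
            intro f; rw [hg, coeff_monomial_mul']
          have hsub : d - (d - e₀) = e₀ := tsub_tsub_cancel_of_le he₀d
          have hgd : coeff d g = coeff d p := by
            rw [hgcoeff, if_pos tsub_le_self, hsub, hc, div_mul_cancel₀ _ hlc]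
          set p' := p - g with hp'def
          have hp'K : p' ∈ K := by
            apply step
            intro f hf
            rw [mem_support_iff, hp'def, coeff_sub] at hf
            have hfd : f ≠ d := by
              rintro rfl; rw [hgd] at hf; simp at hf
            have hfle : mo.toSyn f ≤ mo.toSyn d := by
              by_cases hfp : coeff f p ≠ 0
              · exact hdmax f (mem_support_iff.mpr hfp)
              · push_neg at hfp
                have hgf : coeff f g ≠ 0 := by
                  intro h; rw [hfp, h] at hf; simp at hf
                rw [hgcoeff] at hgf
                by_cases hle : d - e₀ ≤ f
                · rw [if_pos hle] at hgf
                  have : coeff (f - (d - e₀)) q ≠ 0 := fun h => hgf (by rw [h, mul_zero])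
                  have h1 : mo.toSyn (f - (d - e₀)) ≤ mo.toSyn e₀ :=
                    he₀max _ (mem_support_iff.mpr this)
                  have h2 : mo.toSyn ((f - (d - e₀)) + (d - e₀)) ≤ mo.toSyn (e₀ + (d - e₀)) := by
                    rw [map_add, map_add]
                    exact add_le_add_left h1 _
                  rwa [tsub_add_cancel_of_le hle,
                    show e₀ + (d - e₀) = d by rw [add_comm]; exact tsub_add_cancel_of_le he₀d]
                    at h2
                · rw [if_neg hle] at hgf; exact absurd rfl hgf
            exact lt_of_le_of_ne hfle (fun h => hfd (mo.toSyn.injective h))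
          have : p = p' + g := by simp [hp'def]
          rw [this]
          exact K.add_mem hp'K (Submodule.mem_sup_left hgI)
  exact main (p.support.sup mo.toSyn) p (fun e he => Finset.le_sup he)

lemma exists_interpolant (x : Fin m → F) (T : Finset (Fin m → F)) (hxT : x ∉ T) :
    ∃ p : MvPolynomial (Fin m) F, eval x p = 1 ∧ ∀ y ∈ T, eval y p = 0 := by
  classical
  have h1 : ∀ y : T, x ≠ (y : Fin m → F) := fun y h => hxT (h ▸ y.2)
  choose i hi using fun y : T => Function.ne_iff.mp (h1 y)
  refine ⟨∏ y ∈ T.attach, (C ((x (i y) - (y : Fin m → F) (i y))⁻¹) *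
      (X (i y) - C ((y : Fin m → F) (i y)))), ?_, ?_⟩
  · rw [map_prod]
    rw [Finset.prod_eq_one]
    intro y _
    simp only [map_mul, eval_C, map_sub, eval_X]
    exact inv_mul_cancel₀ (sub_ne_zero.mpr (hi y))
  · intro z hz
    rw [map_prod]
    apply Finset.prod_eq_zero (Finset.mem_attach T ⟨z, hz⟩)
    simp

lemma evals_surjective (S : Finset (Fin m → F)) :
    Function.Surjective (LinearMap.pi
      (fun x : S => (MvPolynomial.aeval (x : Fin m → F)).toLinearMap) :
      MvPolynomial (Fin m) F →ₗ[F] (S → F)) := by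
  classical
  intro f
  have key : ∀ x : S, ∃ p : MvPolynomial (Fin m) F,
      eval (x : Fin m → F) p = 1 ∧ ∀ y ∈ S.erase (x : Fin m → F), eval y p = 0 :=
    fun x => exists_interpolant _ _ (Finset.notMem_erase _ _)
  choose px hpx1 hpx0 using key
  refine ⟨∑ x ∈ S.attach, C (f x) * px x, ?_⟩
  funext y
  simp only [LinearMap.pi_apply, AlgHom.toLinearMap_apply, map_sum, map_mul, aeval_C]
  simp only [Algebra.algebraMap_self, RingHom.id_apply]
  have : ∀ x ∈ S.attach, f x * (aeval (y : Fin m → F)) (px x) =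
      if x = y then f y else 0 := by
    intro x _
    have haev : ∀ p : MvPolynomial (Fin m) F, aeval (y : Fin m → F) p = eval y p := by
      intro p; rw [aeval_def, MvPolynomial.eval]; rfl
    split_ifs with h
    · subst h; rw [haev, hpx1, mul_one]
    · rw [haev, hpx0 x ((y:Fin m → F)) (Finset.mem_erase.mpr ⟨fun hc => h (Subtype.ext hc).symm, y.2⟩), mul_zero]
  rw [Finset.sum_congr rfl this, Finset.sum_ite_eq' S.attach y (fun _ => f y)]
  simp

lemma card_le_footprint (mo : MonomialOrder (Fin m)) (I : Ideal (MvPolynomial (Fin m) F))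
    (hfin : (footprint mo I).Finite) (S : Finset (Fin m → F))
    (hS : ∀ x ∈ S, ∀ p ∈ I, eval x p = 0) : S.card ≤ hfin.toFinset.card := by
  classical
  set ev : MvPolynomial (Fin m) F →ₗ[F] (S → F) :=
    LinearMap.pi fun x : S => (MvPolynomial.aeval (x : Fin m → F)).toLinearMap with hev
  have haev : ∀ (x : Fin m → F) (p : MvPolynomial (Fin m) F), aeval x p = eval x p := by
    intro x p; rw [aeval_def, MvPolynomial.eval]; rfl
  have hsurj : Function.Surjective ev := evals_surjective S
  have hKtop : (Submodule.restrictScalars F I) ⊔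
      Submodule.span F ((fun d => (monomial d (1:F))) '' footprint mo I) = ⊤ :=
    eq_top_iff.mpr fun p _ => footprint_span mo I p
  have hmap : Submodule.map ev ((Submodule.restrictScalars F I) ⊔
      Submodule.span F ((fun d => (monomial d (1:F))) '' footprint mo I)) = ⊤ := by
    rw [hKtop, Submodule.map_top, LinearMap.range_eq_top.mpr hsurj]
  rw [Submodule.map_sup, Submodule.map_span] at hmap
  have hI0 : Submodule.map ev (Submodule.restrictScalars F I) = ⊥ := by
    rw [eq_bot_iff]
    rintro v ⟨p, hp, rfl⟩
    simp only [Submodule.mem_bot]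
    funext x
    simp only [hev, LinearMap.pi_apply, AlgHom.toLinearMap_apply, haev]
    exact hS x x.2 p hp
  rw [hI0, bot_sup_eq] at hmap
  -- use the finset image
  set t : Finset (S → F) := hfin.toFinset.image (fun d => ev (monomial d (1:F))) with ht
  have himg : ev '' ((fun d => (monomial d (1:F))) '' footprint mo I) = (t : Set (S → F)) := by
    rw [ht, Finset.coe_image, Set.Finite.coe_toFinset, Set.image_image]
  rw [himg] at hmap
  have h1 : Module.finrank F (S → F) ≤ t.card := by
    have := finrank_span_finset_le_card (R := F) (M := S → F) t
    rwa [Set.finrank, hmap, finrank_top] at this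
  have h2 : Module.finrank F (S → F) = S.card := by
    rw [Module.finrank_pi, Fintype.card_coe]
  calc S.card = Module.finrank F (S → F) := h2.symm
    _ ≤ t.card := h1
    _ ≤ hfin.toFinset.card := Finset.card_image_le


/-- The footprint bound: if the footprint of `I` is finite, then the affine variety of `I`
has at most `|Δ_≺(I)|` points. -/
theorem stmt_4 (mo : MonomialOrder (Fin m)) (I : Ideal (MvPolynomial (Fin m) F))
    (hfin : (footprint mo I).Finite) :
    {x : Fin m → F | ∀ p ∈ I, eval x p = 0}.Finite ∧
    {x : Fin m → F | ∀ p ∈ I, eval x p = 0}.ncard ≤ (footprint mo I).ncard := by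
  classical
  set V := {x : Fin m → F | ∀ p ∈ I, eval x p = 0} with hV
  have hVfin : V.Finite := by
    by_contra hinf
    obtain ⟨t, htV, htfin, htcard⟩ :=
      Set.Infinite.exists_subset_ncard_eq hinf (hfin.toFinset.card + 1)
    have hle := card_le_footprint mo I hfin htfin.toFinset
      (fun x hx => htV (htfin.mem_toFinset.mp hx))
    rw [Set.ncard_eq_toFinset_card _ htfin] at htcard
    omega
  refine ⟨hVfin, ?_⟩
  have := card_le_footprint mo I hfin hVfin.toFinset
    (fun x hx => hVfin.mem_toFinset.mp hx)
  rwa [← Set.ncard_eq_toFinset_card _ hVfin, ← Set.ncard_eq_toFinset_card _ hfin] at this
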